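/- Let v : ℝ → ℝ be three times continuously differentiable with v''(k) ≤ −1 and v'''(k) ≤ 2 for every k, let c ∈ ℝ, and let g : ℝ → ℝ be differentiable on an open interval containing [c, c+1] with v'(g(p)) = p for all p in that interval. Then the revenue function f(p) = g(p)·(p − c) is concave on the interval [c, c+1]. -/

import Mathlib

/-- Single-product concavity (paper's Theorem 1): if `v` is `C³` with `v'' ≤ -1` and
`v''' ≤ 2` everywhere, and `g` is a differentiable local inverse of `v'` on an open
interval containing `[c, c+1]`, then the revenue `f p = g p * (p - c)` is concave on
`[c, c+1]`. -/
theorem revenue_concave_single_product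
    (v : ℝ → ℝ) (hv : ContDiff ℝ 3 v)
    (hv'' : ∀ k : ℝ, iteratedDeriv 2 v k ≤ -1)
    (hv''' : ∀ k : ℝ, iteratedDeriv 3 v k ≤ 2)
    (c : ℝ) (a b : ℝ) (ha : a < c) (hb : c + 1 < b)
    (g : ℝ → ℝ) (hg : ∀ p ∈ Set.Ioo a b, DifferentiableAt ℝ g p)
    (hinv : ∀ p ∈ Set.Ioo a b, deriv v (g p) = p)
    (f : ℝ → ℝ) (hf : f = fun p => g p * (p - c)) :
    ConcaveOn ℝ (Set.Icc c (c + 1)) f := by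
  subst hf
  set V1 := deriv v with hV1def
  set V2 := deriv V1 with hV2def
  set V3 := deriv V2 with hV3def
  have hvC2 : ContDiff ℝ 2 V1 :=
    (contDiff_succ_iff_deriv.mp (show ContDiff ℝ (2+1) v from by norm_num; exact hv)).2.2
  have hvC1 : ContDiff ℝ 1 V2 :=
    (contDiff_succ_iff_deriv.mp (show ContDiff ℝ (1+1) V1 from by norm_num; exact hvC2)).2.2
  have hV1diff : Differentiable ℝ V1 := hvC2.differentiable (by norm_num)
  have hV2diff : Differentiable ℝ V2 := hvC1.differentiable (by norm_num)
  have hi2 : iteratedDeriv 2 v = V2 := by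
    simp [iteratedDeriv_succ, iteratedDeriv_zero, hV1def, hV2def]
  have hi3 : iteratedDeriv 3 v = V3 := by
    simp [iteratedDeriv_succ, iteratedDeriv_zero, hV1def, hV2def, hV3def]
  have hV2le : ∀ k, V2 k ≤ -1 := by intro k; have := hv'' k; rwa [hi2] at this
  have hV3le : ∀ k, V3 k ≤ 2 := by intro k; have := hv''' k; rwa [hi3] at this
  have hV2ne : ∀ k, V2 k ≠ 0 := fun k => by have := hV2le k; intro h; rw [h] at this; linarith
  set s := Set.Ioo a b with hsdef
  have hs : IsOpen s := isOpen_Ioo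
  -- derivative of g on s
  have hderiv_g : ∀ p ∈ s, deriv g p = (V2 (g p))⁻¹ := by
    intro p hp
    have h1 : deriv (fun q => V1 (g q)) p = V2 (g p) * deriv g p := by
      rw [show (fun q => V1 (g q)) = V1 ∘ g from rfl,
        deriv_comp p (hV1diff.differentiableAt) (hg p hp)]
    have heq : (fun q => V1 (g q)) =ᶠ[nhds p] id :=
      Filter.eventuallyEq_of_mem (hs.mem_nhds hp) (fun q hq => hinv q hq)
    have h2 : deriv (fun q => V1 (g q)) p = 1 := by rw [heq.deriv_eq, deriv_id]
    have h3 : V2 (g p) * deriv g p = 1 := by rw [← h1, h2]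
    exact (inv_eq_of_mul_eq_one_right h3).symm
  set φ : ℝ → ℝ := fun q => (V2 (g q))⁻¹ with hφdef
  have hφdiff : ∀ p ∈ s, DifferentiableAt ℝ φ p := fun p hp =>
    ((hV2diff.differentiableAt).comp p (hg p hp)).inv (hV2ne _)
  have hgφ : ∀ p ∈ s, deriv g =ᶠ[nhds p] φ := fun p hp =>
    Filter.eventuallyEq_of_mem (hs.mem_nhds hp) (fun q hq => hderiv_g q hq)
  -- second derivative of g
  have hderiv2_g : ∀ p ∈ s,
      deriv (deriv g) p = -(V3 (g p) * deriv g p) / (V2 (g p)) ^ 2 := by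
    intro p hp
    rw [(hgφ p hp).deriv_eq, hφdef]
    have hcomp : DifferentiableAt ℝ (fun q => V2 (g q)) p :=
      (hV2diff.differentiableAt).comp p (hg p hp)
    rw [deriv_fun_inv'' hcomp (hV2ne _)]
    congr 1
    rw [show (fun q => V2 (g q)) = V2 ∘ g from rfl,
      deriv_comp p (hV2diff.differentiableAt) (hg p hp)]
  -- interval facts
  have hsub : Set.Icc c (c+1) ⊆ s := fun x hx => ⟨lt_of_lt_of_le ha hx.1, lt_of_le_of_lt hx.2 hb⟩
  have hint : interior (Set.Icc c (c+1)) = Set.Ioo c (c+1) := interior_Icc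
  have hsub' : Set.Ioo c (c+1) ⊆ s := fun x hx =>
    ⟨lt_trans ha hx.1, lt_trans hx.2 hb⟩
  -- first derivative of f on s
  set F1 : ℝ → ℝ := fun q => deriv g q * (q - c) + g q with hF1def
  have hderiv_f : ∀ p ∈ s, deriv (fun q => g q * (q - c)) p = F1 p := by
    intro p hp
    rw [deriv_fun_mul (hg p hp) (by fun_prop)]
    have : deriv (fun q => q - c) p = 1 := by
      rw [deriv_fun_sub differentiableAt_fun_id (differentiableAt_const c), deriv_id'', deriv_const]
      ring
    rw [this]; ring
  -- F1 is eventually equal to a nice function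
  have hF1' : ∀ p ∈ s, F1 =ᶠ[nhds p] (fun q => φ q * (q - c) + g q) := by
    intro p hp
    filter_upwards [hs.mem_nhds hp] with q hq
    rw [hF1def]; simp only; rw [hderiv_g q hq]
  have hF1diff : ∀ p ∈ s, DifferentiableAt ℝ F1 p := by
    intro p hp
    exact (((hφdiff p hp).mul (by fun_prop)).add (hg p hp)).congr_of_eventuallyEq (hF1' p hp)
  have hfF1 : ∀ p ∈ s, (deriv (fun q => g q * (q - c))) =ᶠ[nhds p] F1 := fun p hp =>
    Filter.eventuallyEq_of_mem (hs.mem_nhds hp) (fun q hq => hderiv_f q hq)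
  -- second derivative of f
  have hderiv2_f : ∀ p ∈ s,
      deriv (deriv (fun q => g q * (q - c))) p
        = deriv φ p * (p - c) + 2 * deriv g p := by
    intro p hp
    rw [(hfF1 p hp).deriv_eq, (hF1' p hp).deriv_eq]
    rw [deriv_fun_add ((hφdiff p hp).fun_mul (by fun_prop)) (hg p hp),
      deriv_fun_mul (hφdiff p hp) (by fun_prop)]
    have h1 : deriv (fun q => q - c) p = 1 := by
      rw [deriv_fun_sub differentiableAt_fun_id (differentiableAt_const c), deriv_id'', deriv_const]
      ring
    have h2 : φ p = deriv g p := (hderiv_g p hp).symm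
    rw [h1, h2]; ring
  -- deriv φ formula
  have hderivφ : ∀ p ∈ s, deriv φ p = -(V3 (g p) * deriv g p) / (V2 (g p)) ^ 2 := by
    intro p hp
    rw [← (hgφ p hp).deriv_eq]
    exact hderiv2_g p hp
  -- apply concavity criterion
  apply concaveOn_of_deriv2_nonpos (convex_Icc c (c+1))
  · exact ContinuousOn.mul
      (fun x hx => ((hg x (hsub hx)).continuousAt).continuousWithinAt)
      (by fun_prop)
  · intro x hx
    rw [hint] at hx
    exact ((hg x (hsub' hx)).mul (by fun_prop)).differentiableWithinAt
  · intro x hx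
    rw [hint] at hx
    exact ((hF1diff x (hsub' hx)).congr_of_eventuallyEq
      (hfF1 x (hsub' hx))).differentiableWithinAt
  · intro x hx
    rw [hint] at hx
    have hxs : x ∈ s := hsub' hx
    have h2 : deriv^[2] (fun q => g q * (q - c)) x
        = deriv φ x * (x - c) + 2 * deriv g x := by
      rw [Function.iterate_succ, Function.iterate_one, Function.comp_apply]
      exact hderiv2_f x hxs
    rw [h2, hderivφ x hxs]
    set G := deriv g x with hGdef
    have hGeq : G = (V2 (g x))⁻¹ := hderiv_g x hxs
    have hV2x : V2 (g x) ≤ -1 := hV2le (g x)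
    have hGV2 : G * V2 (g x) = 1 := by rw [hGeq]; exact inv_mul_cancel₀ (hV2ne _)
    have hG0 : G < 0 := by nlinarith
    have hG1 : -1 ≤ G := by nlinarith
    have hV3x : V3 (g x) ≤ 2 := hV3le (g x)
    have hsq : (V2 (g x)) ^ 2 = G⁻¹ ^ 2 := by rw [hGeq, inv_inv]
    have hGne : G ≠ 0 := ne_of_lt hG0
    have hkey : -(V3 (g x) * G) / (V2 (g x)) ^ 2 = -(V3 (g x)) * G ^ 3 := by
      rw [hsq]; field_simp
    rw [hkey]
    have ht0 : 0 ≤ x - c := by linarith [hx.1]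
    have ht1 : x - c ≤ 1 := by linarith [hx.2]
    nlinarith [mul_nonneg (mul_nonneg (neg_nonneg.mpr (le_of_lt hG0)) (sq_nonneg G)) ht0,
      sq_nonneg G, sq_nonneg (G + 1), mul_nonneg ht0 (sq_nonneg G),
      mul_nonneg (sub_nonneg.mpr ht1) (mul_nonneg (neg_nonneg.mpr hG0.le) (sq_nonneg G))]
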